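/- (Entropy upper bound for the a priori covariance) Under the stated assumptions, the positive definite Riccati solution Σ satisfies ln det(Σ) ≤ tr(AᵀA)/m + tr(W). -/

import Mathlib

open Matrix

section helpers

lemma psd_trace_nonneg' {n : ℕ} {M : Matrix (Fin n) (Fin n) ℝ} (h : M.PosSemidef) :
    0 ≤ M.trace := by
  rw [Matrix.trace]
  refine Finset.sum_nonneg fun i _ => ?_
  have := h.dotProduct_mulVec_nonneg (Pi.single i 1)
  simpa [Matrix.diag] using this

lemma trace_eq_sum_eig' {n : ℕ} {S : Matrix (Fin n) (Fin n) ℝ} (h : S.IsHermitian) :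
    S.trace = ∑ i, h.eigenvalues i := by
  simpa using h.trace_eq_sum_eigenvalues

lemma logdet_le_trace' {n : ℕ} {S : Matrix (Fin n) (Fin n) ℝ} (hS : S.PosDef) :
    Real.log S.det ≤ S.trace := by
  have hev : ∀ i, 0 < hS.isHermitian.eigenvalues i := hS.eigenvalues_pos
  have hdet : S.det = ∏ i, hS.isHermitian.eigenvalues i := by
    rw [hS.isHermitian.det_eq_prod_eigenvalues]; simp [RCLike.ofReal_real_eq_id]
  rw [hdet, Real.log_prod (fun i _ => (hev i).ne'), trace_eq_sum_eig' hS.isHermitian]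
  refine Finset.sum_le_sum fun i _ => ?_
  have := Real.log_le_sub_one_of_pos (hev i)
  linarith

lemma inv_psd_bound' {n : ℕ} {X : Matrix (Fin n) (Fin n) ℝ} {m : ℝ} (hm : 0 < m)
    (hX : X.PosDef) (h : (X - m • 1).PosSemidef) :
    ((m⁻¹ • 1 - X⁻¹ : Matrix (Fin n) (Fin n) ℝ)).PosSemidef := by
  have hXdet : IsUnit X.det := isUnit_iff_ne_zero.mpr hX.det_pos.ne'
  have hXinv : X * X⁻¹ = 1 := Matrix.mul_nonsing_inv _ hXdet
  refine Matrix.PosSemidef.of_dotProduct_mulVec_nonneg ?_ ?_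
  · exact (by simp [Matrix.IsHermitian, Matrix.conjTranspose_smul] :
      ((m⁻¹ • 1 : Matrix (Fin n) (Fin n) ℝ)).IsHermitian).sub hX.inv.isHermitian
  · intro x
    set y := X⁻¹ *ᵥ x with hy
    have hxy : X *ᵥ y = x := by
      rw [hy, Matrix.mulVec_mulVec, hXinv, Matrix.one_mulVec]
    have hp0 : 0 ≤ y ⬝ᵥ y := Finset.sum_nonneg fun i _ => mul_self_nonneg _
    have hq0 : 0 ≤ (X *ᵥ y) ⬝ᵥ (X *ᵥ y) := Finset.sum_nonneg fun i _ => mul_self_nonneg _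
    have ht : m * (y ⬝ᵥ y) ≤ y ⬝ᵥ (X *ᵥ y) := by
      have := h.dotProduct_mulVec_nonneg y
      simp only [Matrix.sub_mulVec, Matrix.smul_mulVec, Matrix.one_mulVec,
        dotProduct_sub, dotProduct_smul, star_trivial, smul_eq_mul] at this
      linarith
    have hcs : (y ⬝ᵥ (X *ᵥ y)) ^ 2 ≤ (y ⬝ᵥ y) * ((X *ᵥ y) ⬝ᵥ (X *ᵥ y)) := by
      have := Finset.sum_mul_sq_le_sq_mul_sq Finset.univ y (X *ᵥ y)
      simpa [dotProduct, sq] using this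
    have key : m * (y ⬝ᵥ (X *ᵥ y)) ≤ (X *ᵥ y) ⬝ᵥ (X *ᵥ y) := by
      rcases eq_or_lt_of_le hp0 with hp | hp
      · have h1 : 0 ≤ y ⬝ᵥ (X *ᵥ y) := by nlinarith
        have h2 : y ⬝ᵥ (X *ᵥ y) = 0 := by nlinarith
        rw [h2]; simpa using hq0
      · nlinarith [mul_le_mul_of_nonneg_right ht (le_trans (by nlinarith) ht)]
    have hgoal : x ⬝ᵥ y ≤ m⁻¹ * (x ⬝ᵥ x) := by
      rw [← hxy, dotProduct_comm (X *ᵥ y) y, inv_mul_eq_div, le_div_iff₀ hm]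
      linarith [key]
    simp only [Matrix.sub_mulVec, Matrix.smul_mulVec, Matrix.one_mulVec,
      dotProduct_sub, dotProduct_smul, star_trivial, smul_eq_mul]
    linarith [hgoal]

end helpers

/-- Entropy upper bound for the a priori covariance:
`ln det S ≤ tr(AᵀA)/m + tr W`, where `m = min_i c_i²/σ_i²`. -/
theorem riccati_logdet_upper {n : ℕ} (hn : 1 ≤ n)
    (A W S : Matrix (Fin n) (Fin n) ℝ)
    (c σ : Fin n → ℝ) (hc : ∀ i, 0 < c i) (hσ : ∀ i, 0 < σ i)
    (hW : W.PosDef) (hS : S.PosDef)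
    (hric : S = A * S * Aᵀ -
        A * S * (Matrix.diagonal c)ᵀ *
          (Matrix.diagonal c * S * (Matrix.diagonal c)ᵀ +
            Matrix.diagonal fun i => σ i ^ 2)⁻¹ *
          Matrix.diagonal c * S * Aᵀ + W) :
    Real.log S.det ≤ (Aᵀ * A).trace / (⨅ i, c i ^ 2 / σ i ^ 2) + W.trace := by
  haveI : Nonempty (Fin n) := Fin.pos_iff_nonempty.mp hn
  have hσ2 : ∀ i, 0 < σ i ^ 2 := fun i => pow_pos (hσ i) 2
  have hfi : ∀ i, 0 < c i ^ 2 / σ i ^ 2 := fun i => div_pos (pow_pos (hc i) 2) (hσ2 i)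
  rw [Matrix.diagonal_transpose] at hric
  set m : ℝ := ⨅ i, c i ^ 2 / σ i ^ 2 with hmdef
  set C : Matrix (Fin n) (Fin n) ℝ := Matrix.diagonal c with hCdef
  set V : Matrix (Fin n) (Fin n) ℝ := Matrix.diagonal (fun i => σ i ^ 2) with hVdef
  set R : Matrix (Fin n) (Fin n) ℝ := C * S * C + V with hRdef
  have hmle : ∀ i, m ≤ c i ^ 2 / σ i ^ 2 := fun i => ciInf_le (Finite.bddBelow_range _) i
  have hm : 0 < m := by
    obtain ⟨i₀, hi₀⟩ := Finite.exists_min (fun i => c i ^ 2 / σ i ^ 2)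
    exact lt_of_lt_of_le (hfi i₀) (le_ciInf hi₀)
  set Vi : Matrix (Fin n) (Fin n) ℝ := Matrix.diagonal (fun i => (σ i ^ 2)⁻¹) with hVidef
  set N : Matrix (Fin n) (Fin n) ℝ := Matrix.diagonal (fun i => c i ^ 2 / σ i ^ 2) with hNdef
  set M : Matrix (Fin n) (Fin n) ℝ := S - S * C * R⁻¹ * (C * S) with hMdef
  set X : Matrix (Fin n) (Fin n) ℝ := S⁻¹ + N with hXdef
  have hVVi : V * Vi = 1 := by
    rw [hVdef, hVidef, Matrix.diagonal_mul_diagonal]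
    rw [show (fun i => σ i ^ 2 * (σ i ^ 2)⁻¹) = fun _ : Fin n => (1:ℝ) from
      funext fun i => mul_inv_cancel₀ (hσ2 i).ne', Matrix.diagonal_one]
  have hCViC : C * (Vi * C) = N := by
    rw [hCdef, hVidef, hNdef, Matrix.diagonal_mul_diagonal, Matrix.diagonal_mul_diagonal]
    exact congrArg Matrix.diagonal (funext fun i => by rw [div_eq_mul_inv, sq]; ring)
  have hCherm : Cᴴ = C := by
    rw [Matrix.conjTranspose_eq_transpose_of_trivial, hCdef, Matrix.diagonal_transpose]
  have hRpd : R.PosDef := by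
    rw [hRdef]
    refine Matrix.PosDef.posSemidef_add ?_ ?_
    · have := hS.posSemidef.mul_mul_conjTranspose_same C
      rwa [hCherm] at this
    · exact Matrix.posDef_diagonal_iff.mpr hσ2
  have hRinv : R⁻¹ * R = 1 :=
    Matrix.nonsing_inv_mul _ (isUnit_iff_ne_zero.mpr hRpd.det_pos.ne')
  have hSinv : S * S⁻¹ = 1 :=
    Matrix.mul_nonsing_inv _ (isUnit_iff_ne_zero.mpr hS.det_pos.ne')
  -- C * S * X = R * (Vi * C)
  have hCSX : C * (S * X) = R * (Vi * C) := by
    have h1 : C * (S * X) = C + C * (S * N) := by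
      rw [hXdef, Matrix.mul_add S, hSinv, Matrix.mul_add C, Matrix.mul_one]
    have h2 : R * (Vi * C) = C * (S * N) + C := by
      rw [hRdef, Matrix.add_mul, ← Matrix.mul_assoc V, hVVi, Matrix.one_mul]
      congr 1
      rw [Matrix.mul_assoc (C * S) C, hCViC, Matrix.mul_assoc]
    rw [h1, h2, add_comm]
  have hMX : M * X = 1 := by
    have hSX : S * X = 1 + S * N := by
      rw [hXdef, Matrix.mul_add, hSinv]
    rw [hMdef, Matrix.sub_mul, hSX]
    have : S * C * R⁻¹ * (C * S) * X = S * N := by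
      rw [Matrix.mul_assoc (S * C * R⁻¹) (C * S) X, Matrix.mul_assoc C S X, hCSX,
        Matrix.mul_assoc (S * C) R⁻¹ _, ← Matrix.mul_assoc R⁻¹ R _, hRinv, Matrix.one_mul,
        Matrix.mul_assoc S C _, hCViC]
    rw [this]
    abel
  have hXinv_eq : X⁻¹ = M := Matrix.inv_eq_left_inv hMX
  have hXpd : X.PosDef := by
    rw [hXdef]
    exact Matrix.PosDef.add_posSemidef hS.inv
      (Matrix.posSemidef_diagonal_iff.mpr fun i => (hfi i).le)
  have hXm : (X - m • 1).PosSemidef := by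
    have hEq : X - m • 1 = S⁻¹ + Matrix.diagonal (fun i => c i ^ 2 / σ i ^ 2 - m) := by
      rw [hXdef, hNdef]
      ext i j
      rcases eq_or_ne i j with rfl | hij
      · simp [Matrix.diagonal_apply_eq, Matrix.one_apply_eq]; ring
      · simp [Matrix.diagonal_apply_ne _ hij, Matrix.one_apply_ne hij]
    rw [hEq]
    exact (hS.inv.posSemidef).add
      (Matrix.posSemidef_diagonal_iff.mpr fun i => sub_nonneg.mpr (hmle i))
  have hkey : ((m⁻¹ • 1 - M : Matrix (Fin n) (Fin n) ℝ)).PosSemidef := by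
    have := inv_psd_bound' hm hXpd hXm
    rwa [hXinv_eq] at this
  have hSeq : S = A * M * Aᵀ + W := by
    rw [hric, hMdef]
    noncomm_ring
  have hPSD2 : (A * (m⁻¹ • 1 - M) * Aᵀ).PosSemidef := by
    have := hkey.mul_mul_conjTranspose_same A
    rwa [Matrix.conjTranspose_eq_transpose_of_trivial] at this
  have hsplit : A * (m⁻¹ • 1 - M) * Aᵀ = m⁻¹ • (A * Aᵀ) - A * M * Aᵀ := by
    rw [Matrix.mul_sub, Matrix.sub_mul, Matrix.mul_smul, Matrix.mul_one, Matrix.smul_mul]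
  have htrA : (A * M * Aᵀ).trace ≤ m⁻¹ * (Aᵀ * A).trace := by
    have h0 := psd_trace_nonneg' hPSD2
    rw [hsplit, Matrix.trace_sub, Matrix.trace_smul, Matrix.trace_mul_comm A Aᵀ,
      smul_eq_mul] at h0
    linarith
  have htr : S.trace = (A * M * Aᵀ).trace + W.trace := by
    conv_lhs => rw [hSeq]
    rw [Matrix.trace_add]
  calc Real.log S.det ≤ S.trace := logdet_le_trace' hS
    _ = (A * M * Aᵀ).trace + W.trace := htr
    _ ≤ m⁻¹ * (Aᵀ * A).trace + W.trace := by linarith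
    _ = (Aᵀ * A).trace / m + W.trace := by rw [inv_mul_eq_div]
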